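/- Define F : ℤ → ℤ by F(m) = m/4 if m ≡ 0 (mod 4), F(m) = (m − 3)/4 if m ≡ 3 (mod 4), and F(m) = m if m ≡ 1 or 2 (mod 4). Then: (a) for every m ∈ ℤ the sequence F^k(m) is eventually constant, i.e., there exists k with F^{k+1}(m) = F^k(m); (b) if every iterate F^k(m) is congruent to 0 or 3 mod 4, then the eventual constant value is 0 when m ≥ 0 and is −1 when m < 0; (c) if some iterate F^k(m) is congruent to 1 or 2 mod 4, then the eventual constant value is congruent to 1 or 2 mod 4. In particular, for every m exactly one of the following holds: the orbit of m under F stabilizes at 0, stabilizes at −1, or stabilizes at an integer congruent to 1 or 2 mod 4. -/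
import Mathlib


/-- The reduction map of the twisted rabbit problem: `F m = m/4` if `m ≡ 0 (mod 4)`,
`F m = (m-3)/4` if `m ≡ 3 (mod 4)`, and `F m = m` if `m ≡ 1, 2 (mod 4)`. -/
def twistedRabbitStep (m : ℤ) : ℤ :=
  if m % 4 = 0 then m / 4
  else if m % 4 = 3 then (m - 3) / 4
  else m

/-- `m` stabilizes at `v` under iteration of `twistedRabbitStep`. -/
def StabilizesAt (m v : ℤ) : Prop :=
  ∃ N : ℕ, ∀ k : ℕ, N ≤ k → twistedRabbitStep^[k] m = v


lemma trs_fix_class (v : ℤ) (h : twistedRabbitStep v = v) :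
    v = 0 ∨ v = -1 ∨ (v % 4 = 1 ∨ v % 4 = 2) := by
  unfold twistedRabbitStep at h; split_ifs at h <;> omega

lemma trs_fix_of_mod (v : ℤ) (h : v % 4 = 1 ∨ v % 4 = 2) : twistedRabbitStep v = v := by
  unfold twistedRabbitStep; split_ifs <;> omega

lemma trs_bounds (m : ℤ) :
    (0 ≤ m → 0 ≤ twistedRabbitStep m ∧ twistedRabbitStep m ≤ m) ∧
    (m < 0 → m ≤ twistedRabbitStep m ∧ twistedRabbitStep m < 0) := by
  unfold twistedRabbitStep; split_ifs <;> constructor <;> intro <;> omega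

lemma trs_descent (m : ℤ) (h : twistedRabbitStep m ≠ m) :
    (if 0 ≤ twistedRabbitStep m then twistedRabbitStep m else -(twistedRabbitStep m + 1)).toNat <
    (if 0 ≤ m then m else -(m+1)).toNat := by
  unfold twistedRabbitStep at *; split_ifs at * <;> omega

lemma trs_stab_of_fix (m : ℤ) (k : ℕ)
    (h : twistedRabbitStep (twistedRabbitStep^[k] m) = twistedRabbitStep^[k] m) :
    StabilizesAt m (twistedRabbitStep^[k] m) := by
  refine ⟨k, fun j hj => ?_⟩
  induction j, hj using Nat.le_induction with
  | base => rfl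
  | succ n hn ih => rw [Function.iterate_succ_apply', ih, h]

lemma trs_stab_exists_aux : ∀ n : ℕ, ∀ m : ℤ,
    (if 0 ≤ m then m else -(m+1)).toNat ≤ n →
    ∃ v, twistedRabbitStep v = v ∧ StabilizesAt m v := by
  intro n
  induction n with
  | zero =>
    intro m hm
    have hf : twistedRabbitStep m = m := by
      have : m = 0 ∨ m = -1 := by split_ifs at hm <;> omega
      unfold twistedRabbitStep; rcases this with rfl | rfl <;> norm_num
    exact ⟨m, hf, trs_stab_of_fix m 0 hf⟩
  | succ n ih =>
    intro m hm
    by_cases hf : twistedRabbitStep m = m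
    · exact ⟨m, hf, trs_stab_of_fix m 0 hf⟩
    · have hd := trs_descent m hf
      obtain ⟨v, hv, N, hN⟩ := ih (twistedRabbitStep m) (by omega)
      refine ⟨v, hv, N + 1, fun k hk => ?_⟩
      obtain ⟨j, rfl⟩ : ∃ j, k = j + 1 := ⟨k - 1, by omega⟩
      rw [Function.iterate_succ_apply]
      exact hN j (by omega)

lemma trs_stab_exists (m : ℤ) : ∃ v, twistedRabbitStep v = v ∧ StabilizesAt m v :=
  trs_stab_exists_aux _ m le_rfl

lemma trs_stab_unique {m v w : ℤ} (h1 : StabilizesAt m v) (h2 : StabilizesAt m w) : v = w := by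
  obtain ⟨N1, h1⟩ := h1; obtain ⟨N2, h2⟩ := h2
  rw [← h1 (max N1 N2) (le_max_left _ _), h2 (max N1 N2) (le_max_right _ _)]

lemma trs_iter_nonneg (m : ℤ) (h : 0 ≤ m) (k : ℕ) : 0 ≤ twistedRabbitStep^[k] m := by
  induction k with
  | zero => exact h
  | succ n ih => rw [Function.iterate_succ_apply']; exact ((trs_bounds _).1 ih).1

lemma trs_iter_neg (m : ℤ) (h : m < 0) (k : ℕ) : twistedRabbitStep^[k] m < 0 := by
  induction k with
  | zero => exact h
  | succ n ih => rw [Function.iterate_succ_apply']; exact ((trs_bounds _).2 ih).2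

lemma trs_part_b (m : ℤ)
    (h : ∀ k : ℕ, twistedRabbitStep^[k] m % 4 = 0 ∨ twistedRabbitStep^[k] m % 4 = 3) :
    (0 ≤ m → StabilizesAt m 0) ∧ (m < 0 → StabilizesAt m (-1)) := by
  obtain ⟨v, hv, hst⟩ := trs_stab_exists m
  obtain ⟨N, hN⟩ := hst
  have hvN : v = twistedRabbitStep^[N] m := (hN N le_rfl).symm
  have hvmod := h N
  rw [← hvN] at hvmod
  have hcl := trs_fix_class v hv
  have hv01 : v = 0 ∨ v = -1 := by omega
  constructor
  · intro h0
    have := trs_iter_nonneg m h0 N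
    rw [← hvN] at this
    have : v = 0 := by omega
    exact this ▸ ⟨N, hN⟩
  · intro h0
    have := trs_iter_neg m h0 N
    rw [← hvN] at this
    have : v = -1 := by omega
    exact this ▸ ⟨N, hN⟩

lemma trs_part_c (m : ℤ)
    (h : ∃ k : ℕ, twistedRabbitStep^[k] m % 4 = 1 ∨ twistedRabbitStep^[k] m % 4 = 2) :
    ∃ v : ℤ, (v % 4 = 1 ∨ v % 4 = 2) ∧ StabilizesAt m v := by
  obtain ⟨k, hk⟩ := h
  exact ⟨_, hk, trs_stab_of_fix m k (trs_fix_of_mod _ hk)⟩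

/-- (a) Every orbit of `F = twistedRabbitStep` is eventually constant.
(b) If every iterate of `m` is `≡ 0` or `3 (mod 4)`, then the eventual constant value is `0`
when `m ≥ 0` and `-1` when `m < 0`.  (c) If some iterate is `≡ 1` or `2 (mod 4)`, then the
eventual constant value is `≡ 1` or `2 (mod 4)`.  In particular, for every `m` exactly one of
the following holds: the orbit stabilizes at `0`, stabilizes at `-1`, or stabilizes at an
integer congruent to `1` or `2 (mod 4)`. -/
theorem twistedRabbit_reduction_trichotomy :
    (∀ m : ℤ, ∃ k : ℕ, twistedRabbitStep^[k + 1] m = twistedRabbitStep^[k] m) ∧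
    (∀ m : ℤ,
      (∀ k : ℕ, twistedRabbitStep^[k] m % 4 = 0 ∨ twistedRabbitStep^[k] m % 4 = 3) →
        ((0 ≤ m → StabilizesAt m 0) ∧ (m < 0 → StabilizesAt m (-1)))) ∧
    (∀ m : ℤ,
      (∃ k : ℕ, twistedRabbitStep^[k] m % 4 = 1 ∨ twistedRabbitStep^[k] m % 4 = 2) →
        ∃ v : ℤ, (v % 4 = 1 ∨ v % 4 = 2) ∧ StabilizesAt m v) ∧
    (∀ m : ℤ,
      (StabilizesAt m 0 ∧ ¬ StabilizesAt m (-1) ∧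
          ¬ ∃ v : ℤ, (v % 4 = 1 ∨ v % 4 = 2) ∧ StabilizesAt m v) ∨
      (¬ StabilizesAt m 0 ∧ StabilizesAt m (-1) ∧
          ¬ ∃ v : ℤ, (v % 4 = 1 ∨ v % 4 = 2) ∧ StabilizesAt m v) ∨
      (¬ StabilizesAt m 0 ∧ ¬ StabilizesAt m (-1) ∧
          ∃ v : ℤ, (v % 4 = 1 ∨ v % 4 = 2) ∧ StabilizesAt m v)) := by
  refine ⟨?_, trs_part_b, trs_part_c, ?_⟩
  · intro m
    obtain ⟨v, hv, N, hN⟩ := trs_stab_exists m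
    refine ⟨N, ?_⟩
    rw [hN N le_rfl, Function.iterate_succ_apply', hN N le_rfl, hv]
  · intro m
    by_cases hc : ∃ k : ℕ, twistedRabbitStep^[k] m % 4 = 1 ∨ twistedRabbitStep^[k] m % 4 = 2
    · obtain ⟨v, hv, hst⟩ := trs_part_c m hc
      right; right
      refine ⟨fun h0 => ?_, fun h1 => ?_, ⟨v, hv, hst⟩⟩
      · have := trs_stab_unique hst h0; omega
      · have := trs_stab_unique hst h1; omega
    · push_neg at hc
      have hall : ∀ k : ℕ, twistedRabbitStep^[k] m % 4 = 0 ∨ twistedRabbitStep^[k] m % 4 = 3 := by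
        intro k; have := hc k; omega
      obtain ⟨hb1, hb2⟩ := trs_part_b m hall
      rcases le_or_gt 0 m with h0 | h0
      · have hst := hb1 h0
        left
        refine ⟨hst, fun h1 => ?_, fun ⟨v, hv, hst'⟩ => ?_⟩
        · have := trs_stab_unique hst h1; omega
        · have := trs_stab_unique hst hst'; omega
      · have hst := hb2 h0
        right; left
        refine ⟨fun h1 => ?_, hst, fun ⟨v, hv, hst'⟩ => ?_⟩
        · have := trs_stab_unique hst h1; omega
        · have := trs_stab_unique hst hst'; omega
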